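/- Let M be an MSC over P and Σ, let q ∈ P, e ∈ E_q, and p ∈ P. Then last_p(e) = max{ last_π(e) : π ∈ Π^gossip_{p,q} }, where the maximum of a set of elements of E ∪ {⊥} is taken in the extended order (and equals ⊥ if all elements are ⊥). -/

import Mathlib

namespace Gossip

/-- Events extended with bottom and top elements. -/
inductive ExtEv (E : Type) : Type where
  | bot : ExtEv E
  | evt (e : E) : ExtEv E
  | top : ExtEv E

/-- A message sequence chart (MSC) over processes `P`, alphabet `A`,
with (finite, nonempty) set of events `E`. -/
structure MSC (P A E : Type) : Type where
  fintypeE : Fintype E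
  nonemptyE : Nonempty E
  loc : E → P
  lab : E → A
  /-- process successor relation `→` -/
  next : E → E → Prop
  /-- message relation `◁` -/
  msg : E → E → Prop
  next_loc : ∀ {e f : E}, next e f → loc e = loc f
  next_irrefl : ∀ e : E, ¬ next e e
  next_right_unique : ∀ {e f f' : E}, next e f → next e f' → f = f'
  next_left_unique : ∀ {e e' f : E}, next e f → next e' f → e = e'
  next_total : ∀ e f : E, loc e = loc f →
      Relation.ReflTransGen next e f ∨ Relation.ReflTransGen next f e
  msg_loc : ∀ {e f : E}, msg e f → loc e ≠ loc f
  /-- every event belongs to at most one pair of `◁` -/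
  msg_unique : ∀ {e f e' f' : E}, msg e f → msg e' f' →
      (e = e' ∨ e = f' ∨ f = e' ∨ f = f') → e = e' ∧ f = f'
  fifo : ∀ {e f e' f' : E}, msg e f → msg e' f' → loc e = loc e' → loc f = loc f' →
      (Relation.ReflTransGen next e e' ↔ Relation.ReflTransGen next f f')
  /-- `≤ = (→ ∪ ◁)*` is a partial order -/
  causal_antisymm : ∀ {e f : E},
      Relation.ReflTransGen (fun x y => next x y ∨ msg x y) e f →
      Relation.ReflTransGen (fun x y => next x y ∨ msg x y) f e → e = f

namespace MSC

variable {P A E B : Type}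

/-- the causal order `≤ = (→ ∪ ◁)*` -/
def le (M : MSC P A E) : E → E → Prop :=
  Relation.ReflTransGen (fun x y => M.next x y ∨ M.msg x y)

/-- the strict causal order `<` -/
def lt (M : MSC P A E) (e f : E) : Prop := M.le e f ∧ e ≠ f

/-- `→*` -/
def nextStar (M : MSC P A E) : E → E → Prop := Relation.ReflTransGen M.next

/-- the causal order extended to `E ∪ {⊥,⊤}` with `⊥ < e < ⊤` -/
def extLe (M : MSC P A E) : ExtEv E → ExtEv E → Prop
  | .bot, _ => True
  | _, .top => True
  | .evt e, .evt f => M.le e f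
  | _, _ => False

def extLt (M : MSC P A E) (x y : ExtEv E) : Prop := M.extLe x y ∧ x ≠ y

/-- replace the labelling of an MSC (e.g. to pair it with an extra labelling) -/
def relabel (M : MSC P A E) (μ : E → B) : MSC P B E where
  fintypeE := M.fintypeE
  nonemptyE := M.nonemptyE
  loc := M.loc
  lab := μ
  next := M.next
  msg := M.msg
  next_loc := M.next_loc
  next_irrefl := M.next_irrefl
  next_right_unique := M.next_right_unique
  next_left_unique := M.next_left_unique
  next_total := M.next_total
  msg_loc := M.msg_loc
  msg_unique := M.msg_unique
  fifo := M.fifo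
  causal_antisymm := M.causal_antisymm

end MSC

/-- letters of path expressions: `→`, `→*`, `p▷q`, `⟨a⟩` -/
inductive PathLetter (P A : Type) : Type where
  | next : PathLetter P A
  | nextStar : PathLetter P A
  | msg (p q : P) : PathLetter P A
  | lab (a : A) : PathLetter P A

/-- path expressions: finite words over `Γ` -/
abbrev PathExpr (P A : Type) := List (PathLetter P A)

variable {P A E : Type}

def letterSem (M : MSC P A E) : PathLetter P A → E → E → Prop
  | .next => M.next
  | .nextStar => M.nextStar
  | .msg p q => fun e f => M.loc e = p ∧ M.loc f = q ∧ M.msg e f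
  | .lab a => fun e f => e = f ∧ M.lab e = a

/-- `⟦π⟧` -/
def pathSem (M : MSC P A E) : PathExpr P A → E → E → Prop
  | [] => fun e f => e = f
  | l :: π => fun e g => ∃ f, letterSem M l e f ∧ pathSem M π f g

def letterComp : PathLetter P A → P → P → Prop
  | .msg p q => fun x y => x = p ∧ y = q
  | _ => fun x y => x = y

/-- `Comp(π)`; `π ∈ Π_{p,q}` iff `pcomp π p q` -/
def pcomp : PathExpr P A → P → P → Prop
  | [] => fun x y => x = y
  | l :: π => fun x z => ∃ y, letterComp l x y ∧ pcomp π y z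

/-- `IsLast M π e x` holds iff `x = last_π(e)` (with `x = ⊥` iff no `π`-path into `e`). -/
def IsLast (M : MSC P A E) (π : PathExpr P A) (e : E) : ExtEv E → Prop
  | .bot => ∀ f, ¬ pathSem M π f e
  | .evt g => pathSem M π g e ∧ ∀ f, pathSem M π f e → M.le f g
  | .top => False

/-- `IsFirst M π e x` holds iff `x = first_π(e)` (with `x = ⊤` iff no `π`-path out of `e`). -/
def IsFirst (M : MSC P A E) (π : PathExpr P A) (e : E) : ExtEv E → Prop
  | .top => ∀ f, ¬ pathSem M π e f
  | .evt g => pathSem M π e g ∧ ∀ f, pathSem M π e f → M.le g f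
  | .bot => False

/-- `IsFa M π π' e x` holds iff `x = f_{π,π'}(e) = first_{π'}(last_π(e))`, with
`first_{π'}(⊥) := ⊥`. -/
def IsFa (M : MSC P A E) (π π' : PathExpr P A) (e : E) (x : ExtEv E) : Prop :=
  (IsLast M π e ExtEv.bot ∧ x = ExtEv.bot) ∨
    ∃ g, IsLast M π e (ExtEv.evt g) ∧ IsFirst M π' g x

/-- `IsLastProc M p e x` holds iff `x = last_p(e)`, the maximal event of process `p`
strictly below `e` (`⊥` if none). -/
def IsLastProc (M : MSC P A E) (p : P) (e : E) : ExtEv E → Prop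
  | .bot => ∀ f, M.loc f = p → ¬ M.lt f e
  | .evt g => M.loc g = p ∧ M.lt g e ∧ ∀ f, M.loc f = p → M.lt f e → M.le f g
  | .top => False

/-- `π ≼_e π'`, i.e. `last_π(e) ≤ last_{π'}(e)` -/
def ple (M : MSC P A E) (π π' : PathExpr P A) (e : E) : Prop :=
  ∃ x y, IsLast M π e x ∧ IsLast M π' e y ∧ M.extLe x y

def gossipSuffix : P → List P → PathExpr P A
  | _, [] => []
  | p, q :: w => PathLetter.msg p q :: PathLetter.nextStar :: gossipSuffix q w

/-- `π_w` for `w = p :: rest` -/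
def gossipExpr (p : P) (w : List P) : PathExpr P A :=
  match w with
  | [] => [PathLetter.next, PathLetter.nextStar]
  | _ :: _ => PathLetter.nextStar :: gossipSuffix p w

/-- `π ∈ Π^gossip` -/
def IsGossip (π : PathExpr P A) : Prop :=
  ∃ (p : P) (w : List P), (p :: w).Nodup ∧ π = gossipExpr p w

/-- actions of a CFM transition -/
inductive CAct (P A Msg : Type) : Type where
  | internal (a : A) : CAct P A Msg
  | send (a : A) (m : Msg) (q : P) : CAct P A Msg
  | recv (a : A) (m : Msg) (q : P) : CAct P A Msg

def CAct.labelOf {P A Msg : Type} : CAct P A Msg → A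
  | .internal a => a
  | .send a _ _ => a
  | .recv a _ _ => a

/-- a communicating finite-state machine over `P` and `A` -/
structure CFM (P A : Type) : Type 1 where
  Msg : Type
  msgFin : Fintype Msg
  S : Type
  sFin : Fintype S
  ι : P → S
  Δ : P → Set (S × CAct P A Msg × S)
  Acc : Set (P → S)
  wf_send : ∀ p s a m q s', (s, CAct.send a m q, s') ∈ Δ p → q ≠ p
  wf_recv : ∀ p s a m q s', (s, CAct.recv a m q, s') ∈ Δ p → q ≠ p

namespace CFM

variable {P A E : Type}

/-- `ρ` is a run of the CFM `C` on the MSC `M` -/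
def IsRun (C : CFM P A) (M : MSC P A E) (ρ : E → C.S × CAct P A C.Msg × C.S) : Prop :=
  (∀ e, ρ e ∈ C.Δ (M.loc e)) ∧
  (∀ e, ((ρ e).2.1).labelOf = M.lab e) ∧
  (∀ e, (¬ ∃ f, M.next f e) → (ρ e).1 = C.ι (M.loc e)) ∧
  (∀ e f, M.next e f → (ρ e).2.2 = (ρ f).1) ∧
  (∀ e, (¬ ∃ f, M.msg e f) → (¬ ∃ f, M.msg f e) → ∃ a, (ρ e).2.1 = CAct.internal a) ∧
  (∀ e f, M.msg e f → ∃ m, (ρ e).2.1 = CAct.send (M.lab e) m (M.loc f) ∧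
      (ρ f).2.1 = CAct.recv (M.lab f) m (M.loc e))

/-- the run `ρ` is accepting -/
def IsAccepting (C : CFM P A) (M : MSC P A E)
    (ρ : E → C.S × CAct P A C.Msg × C.S) : Prop :=
  ∃ s : P → C.S, s ∈ C.Acc ∧ ∀ p,
    ((∃ e, M.loc e = p) → ∃ e, M.loc e = p ∧ (¬ ∃ f, M.next e f) ∧ s p = (ρ e).2.2) ∧
    ((¬ ∃ e, M.loc e = p) → s p = C.ι p)

/-- `M ∈ L(C)` -/
def Accepts (C : CFM P A) (M : MSC P A E) : Prop :=
  ∃ ρ, C.IsRun M ρ ∧ C.IsAccepting M ρ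

/-- deterministic CFMs -/
def Deterministic (C : CFM P A) : Prop :=
  ∀ p s γ₁ s₁ γ₂ s₂, (s, γ₁, s₁) ∈ C.Δ p → (s, γ₂, s₂) ∈ C.Δ p →
    CAct.labelOf γ₁ = CAct.labelOf γ₂ →
    ((∀ a₁ a₂, γ₁ = CAct.internal a₁ → γ₂ = CAct.internal a₂ → s₁ = s₂) ∧
     (∀ a₁ m₁ a₂ m₂ q, γ₁ = CAct.send a₁ m₁ q → γ₂ = CAct.send a₂ m₂ q →
        s₁ = s₂ ∧ m₁ = m₂) ∧
     (∀ a₁ a₂ m q, γ₁ = CAct.recv a₁ m q → γ₂ = CAct.recv a₂ m q → s₁ = s₂))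

end CFM

/-- acceptance of the extended MSC `(M, ξ)` by a CFM over a product alphabet -/
def AcceptsExt {P A E Ξ : Type} (C : CFM P (A × Ξ)) (M : MSC P A E) (ξ : E → Ξ) : Prop :=
  C.Accepts (M.relabel fun e => (M.lab e, ξ e))

/-- apply `μ` to an extended event, sending both `⊥` and `⊤` to `none` -/
def extToOptMap {E Θ : Type} (μ : E → Θ) : ExtEv E → Option Θ
  | .evt g => some (μ g)
  | _ => none

/-- apply `μ` to an extended event, preserving `⊥` and `⊤` -/
def extMap {E Θ : Type} (μ : E → Θ) : ExtEv E → ExtEv Θ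
  | .bot => ExtEv.bot
  | .evt g => ExtEv.evt (μ g)
  | .top => ExtEv.top

/-- formulas of the temporal logic TL -/
inductive TL (P A : Type) : Type where
  | lab (a : A) : TL P A
  | proc (p : P) : TL P A
  | disj (φ ψ : TL P A) : TL P A
  | neg (φ : TL P A) : TL P A
  | co (φ : TL P A) : TL P A
  | tuntil (φ ψ : TL P A) : TL P A
  | tsince (φ ψ : TL P A) : TL P A

/-- `M, e ⊨ φ` -/
def TLsat (M : MSC P A E) : TL P A → E → Prop
  | .lab a, e => M.lab e = a
  | .proc p, e => M.loc e = p
  | .disj φ ψ, e => TLsat M φ e ∨ TLsat M ψ e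
  | .neg φ, e => ¬ TLsat M φ e
  | .co φ, e => ∃ f, ¬ M.le e f ∧ ¬ M.le f e ∧ TLsat M φ f
  | .tuntil φ ψ, e => ∃ f, M.lt e f ∧ TLsat M ψ f ∧ ∀ g, M.lt e g → M.lt g f → TLsat M φ g
  | .tsince φ ψ, e => ∃ f, M.lt f e ∧ TLsat M ψ f ∧ ∀ g, M.lt f g → M.lt g e → TLsat M φ g

section Aux

variable {P A E : Type}

lemma MSC.nextStar_le (M : MSC P A E) {f g : E} (h : M.nextStar f g) : M.le f g :=
  by
  induction h with
  | refl => exact Relation.ReflTransGen.refl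
  | tail _ h ih => exact ih.tail (Or.inl h)

lemma MSC.nextStar_loc (M : MSC P A E) {f g : E} (h : M.nextStar f g) :
    M.loc f = M.loc g := by
  induction h with
  | refl => rfl
  | tail _ h ih => exact ih.trans (M.next_loc h)

lemma MSC.lt_of_step_le (M : MSC P A E) {g h e : E} (hs : M.next g h ∨ M.msg g h)
    (hle : M.le h e) : M.lt g e := by
  refine ⟨Relation.ReflTransGen.head hs hle, ?_⟩
  rintro rfl
  have heq : h = g := M.causal_antisymm hle (Relation.ReflTransGen.single hs)
  subst heq
  cases hs with
  | inl h' => exact M.next_irrefl _ h'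
  | inr h' => exact M.msg_loc h' rfl

lemma MSC.le_lt_trans (M : MSC P A E) {a b c : E} (h1 : M.le a b) (h2 : M.lt b c) :
    M.lt a c := by
  refine ⟨h1.trans h2.1, ?_⟩
  rintro rfl
  exact h2.2 (M.causal_antisymm h2.1 h1)

lemma MSC.msg_le (M : MSC P A E) {e f : E} (hm : M.msg e f) : M.le e f :=
  Relation.ReflTransGen.single (Or.inr hm)

lemma gossipSuffix_le (M : MSC P A E) : ∀ (w : List P) (r : P) (h e : E),
    pathSem M (gossipSuffix r w) h e → M.le h e := by
  intro w
  induction w with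
  | nil =>
    intro r h e hp
    have : h = e := hp
    subst this; exact Relation.ReflTransGen.refl
  | cons t w ih =>
    rintro r h e ⟨f, ⟨_, _, hm⟩, f', hss, rest⟩
    exact ((M.msg_le hm).trans
      (M.nextStar_le hss)).trans (ih t f' e rest)

lemma splice (M : MSC P A E) : ∀ (w₁ : List P) (r s : P) (w₂ : List P) (h e : E),
    pathSem M (gossipSuffix r (w₁ ++ s :: w₂)) h e →
    ∃ u, M.loc u = s ∧ M.le h u ∧
      pathSem M (PathLetter.nextStar :: gossipSuffix s w₂) u e := by
  intro w₁
  induction w₁ with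
  | nil =>
    rintro r s w₂ h e ⟨f, ⟨_, hfs, hm⟩, rest⟩
    exact ⟨f, hfs, M.msg_le hm, rest⟩
  | cons t w₁ ih =>
    rintro r s w₂ h e ⟨f, ⟨_, _, hm⟩, f', hss, rest⟩
    obtain ⟨u, hu, hle, hp⟩ := ih t s w₂ f' e rest
    exact ⟨u, hu, ((M.msg_le hm).trans
      (M.nextStar_le hss)).trans hle, hp⟩

lemma pcomp_of_path (M : MSC P A E) : ∀ (w : List P) (r : P) (h e : E),
    pathSem M (gossipSuffix r w) h e → M.loc h = r →
    pcomp (gossipSuffix r w : PathExpr P A) r (M.loc e) := by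
  intro w
  induction w with
  | nil =>
    intro r h e hp hr
    have : h = e := hp
    subst this; exact hr.symm
  | cons t w ih =>
    rintro r s e ⟨f, ⟨hfr, hft, hm⟩, f', hss, rest⟩ hr
    exact ⟨t, ⟨rfl, rfl⟩, t, rfl, ih t f' e rest ((M.nextStar_loc hss).symm.trans hft)⟩

lemma mainL (M : MSC P A E) {g e : E} (h : M.le g e) :
    ∃ w : List P, (M.loc g :: w).Nodup ∧
      pathSem M (PathLetter.nextStar :: gossipSuffix (M.loc g) w) g e := by
  induction h using Relation.ReflTransGen.head_induction_on with
  | refl => exact ⟨[], by simp, e, Relation.ReflTransGen.refl, rfl⟩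
  | @head a c hstep hle ih =>
    obtain ⟨w, hnd, hpath⟩ := ih
    cases hstep with
    | inl hn =>
      rw [M.next_loc hn]
      obtain ⟨f, hss, rest⟩ := hpath
      exact ⟨w, hnd, f, Relation.ReflTransGen.head hn hss, rest⟩
    | inr hm =>
      by_cases hmem : M.loc a ∈ M.loc c :: w
      · -- splice
        have hne : M.loc a ≠ M.loc c := M.msg_loc hm
        have hmem' : M.loc a ∈ w := by
          rcases List.mem_cons.mp hmem with h' | h'
          · exact absurd h' hne
          · exact h'
        obtain ⟨w₁, w₂, rfl⟩ := List.append_of_mem hmem'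
        obtain ⟨f, hss, rest⟩ := hpath
        obtain ⟨u, hu, hfu, hupath⟩ := splice M w₁ (M.loc c) (M.loc a) w₂ f e rest
        have hau : M.nextStar a u := by
          rcases M.next_total a u (hu.symm) with h' | h'
          · exact h'
          · have h1 : M.le a u := (M.msg_le hm).trans
              ((M.nextStar_le hss).trans hfu)
            have : u = a := M.causal_antisymm (M.nextStar_le h') h1
            subst this; exact Relation.ReflTransGen.refl
        obtain ⟨f', hss', rest'⟩ := hupath
        refine ⟨w₂, ?_, f', hau.trans hss', rest'⟩
        have hsub : List.Sublist (M.loc a :: w₂) (M.loc c :: (w₁ ++ M.loc a :: w₂)) :=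
          (List.sublist_append_right w₁ (M.loc a :: w₂)).cons (M.loc c)
        exact hnd.sublist hsub
      · exact ⟨M.loc c :: w, List.nodup_cons.mpr ⟨hmem, hnd⟩,
          a, Relation.ReflTransGen.refl, c, ⟨rfl, rfl, hm⟩, hpath⟩

lemma gossip_src (M : MSC P A E) {p q : P} {π : PathExpr P A} (hg : IsGossip π)
    (hc : pcomp π p q) {f e : E} (hs : pathSem M π f e) (he : M.loc e = q) :
    M.loc f = p ∧ M.lt f e := by
  obtain ⟨p', w, hnd, rfl⟩ := hg
  cases w with
  | nil =>
    obtain ⟨f₁, hn, f₂, hss, rfl⟩ := hs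
    obtain ⟨y, rfl, y', rfl, rfl⟩ := hc
    refine ⟨?_, M.lt_of_step_le (Or.inl hn) (M.nextStar_le hss)⟩
    rw [(M.next_loc hn).trans (M.nextStar_loc hss)]
    exact he
  | cons t w =>
    obtain ⟨f₁, hss, f₂, ⟨hf₁, hf₂, hm⟩, rest⟩ := hs
    obtain ⟨y, rfl, y₂, ⟨rfl, _⟩, _⟩ := hc
    refine ⟨(M.nextStar_loc hss).trans hf₁, ?_⟩
    obtain ⟨f₃, hss₂, rest₂⟩ := rest
    have hle : M.le f₂ e := (M.nextStar_le hss₂).trans (gossipSuffix_le M w t f₃ e rest₂)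
    exact M.le_lt_trans (M.nextStar_le hss) (M.lt_of_step_le (Or.inr hm) hle)

end Aux

end Gossip
open Gossip in
/-- for `e ∈ E_q`, `last_p(e) = max { last_π(e) : π ∈ Π^gossip_{p,q} }`:
`last_p(e)` is an upper bound of the `last_π(e)` and is attained by some
`π ∈ Π^gossip_{p,q}`. -/
theorem stmt10 {P A E : Type} [Fintype P] [Fintype A] (M : MSC P A E)
    (p q : P) (e : E) (he : M.loc e = q)
    (x : ExtEv E) (hx : IsLastProc M p e x) :
    (∀ π : PathExpr P A, IsGossip π → pcomp π p q →
        ∀ y, IsLast M π e y → M.extLe y x) ∧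
    (∃ π : PathExpr P A, IsGossip π ∧ pcomp π p q ∧ IsLast M π e x) := by
  constructor
  · intro π hg hc y hy
    cases y with
    | top => exact hy.elim
    | bot => cases x <;> trivial
    | evt h =>
      obtain ⟨hp, _⟩ := hy
      obtain ⟨hloc, hlt⟩ := gossip_src M hg hc hp he
      cases x with
      | bot => exact absurd hlt (hx h hloc)
      | top => trivial
      | evt g => exact hx.2.2 h hloc hlt
  · cases x with
    | top => exact hx.elim
    | bot =>
      by_cases hpq : p = q
      · subst hpq
        refine ⟨gossipExpr p [], ⟨p, [], by simp, rfl⟩, ⟨p, rfl, p, rfl, rfl⟩, ?_⟩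
        rintro f ⟨f₁, hn, f₂, hss, rfl⟩
        have hlt := M.lt_of_step_le (Or.inl hn) (M.nextStar_le hss)
        have hloc : M.loc f = p := by
          rw [(M.next_loc hn).trans (M.nextStar_loc hss)]; exact he
        exact hx f hloc hlt
      · have hg : IsGossip (gossipExpr p [q] : PathExpr P A) :=
          ⟨p, [q], by simp [hpq], rfl⟩
        have hc : pcomp (gossipExpr p [q] : PathExpr P A) p q :=
          ⟨p, rfl, q, ⟨rfl, rfl⟩, q, rfl, rfl⟩
        refine ⟨gossipExpr p [q], hg, hc, ?_⟩
        intro f hf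
        obtain ⟨hloc, hlt⟩ := gossip_src M hg hc hf he
        exact hx f hloc hlt
    | evt g =>
      obtain ⟨hgp, hglt, hgmax⟩ := hx
      obtain ⟨w, hnd, hpath⟩ := mainL M hglt.1
      cases w with
      | nil =>
        obtain ⟨f, hss, hfe⟩ := hpath
        rw [(hfe : f = e)] at hss
        have hpq : p = q := by rw [← hgp, M.nextStar_loc hss]; exact he
        rcases hss.cases_head with rfl | ⟨c, hn, hss'⟩
        · exact absurd rfl hglt.2
        · subst hpq
          have hg' : IsGossip (gossipExpr p [] : PathExpr P A) := ⟨p, [], by simp, rfl⟩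
          have hc' : pcomp (gossipExpr p [] : PathExpr P A) p p :=
            ⟨p, rfl, p, rfl, rfl⟩
          refine ⟨gossipExpr p [], hg', hc', ⟨c, hn, e, hss', rfl⟩, ?_⟩
          intro f hf
          obtain ⟨hloc, hlt⟩ := gossip_src M hg' hc' hf he
          exact hgmax f hloc hlt
      | cons t w' =>
        rw [hgp] at hnd hpath
        have hg' : IsGossip (gossipExpr p (t :: w') : PathExpr P A) :=
          ⟨p, t :: w', hnd, rfl⟩
        have hc' : pcomp (gossipExpr p (t :: w') : PathExpr P A) p q := by
          obtain ⟨f, hss, rest⟩ := hpath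
          have hfp : M.loc f = p := (M.nextStar_loc hss).symm.trans hgp
          exact ⟨p, rfl, he ▸ pcomp_of_path M (t :: w') p f e rest hfp⟩
        refine ⟨gossipExpr p (t :: w'), hg', hc', hpath, ?_⟩
        intro f hf
        obtain ⟨hloc, hlt⟩ := gossip_src M hg' hc' hf he
        exact hgmax f hloc hlt
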